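/- Let Ω be an infinite set. Then every countable subset of the symmetric inverse semigroup I_Ω is contained in a 4-generated subsemigroup of I_Ω; that is, for every countable set A of partial bijections of Ω there exist partial bijections f, g, h, k of Ω such that every element of A belongs to the subsemigroup of I_Ω generated by {f, g, h, k}. -/

import Mathlib

/-- A partial function `Ω →. Ω` is a partial bijection if it is injective on its domain. -/
def IsPartialBij {Ω : Type*} (f : Ω →. Ω) : Prop :=
  ∀ ⦃x y z : Ω⦄, z ∈ f x → z ∈ f y → x = y

/-- The symmetric inverse semigroup `I_Ω`: the type of all partial bijections of `Ω`. -/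
def PartialBij (Ω : Type*) : Type _ :=
  {f : Ω →. Ω // IsPartialBij f}

/-- Composition of partial bijections, written left-to-right: `f * g` means apply `f` first,
then `g`. -/
instance (Ω : Type*) : Semigroup (PartialBij Ω) where
  mul f g := ⟨g.1.comp f.1, by
    intro x y z hx hy
    replace hx := Part.mem_bind_iff.mp (show z ∈ (f.1 x).bind g.1 from hx)
    replace hy := Part.mem_bind_iff.mp (show z ∈ (f.1 y).bind g.1 from hy)
    obtain ⟨u, hu, hzu⟩ := hx
    obtain ⟨v, hv, hzv⟩ := hy
    have huv : u = v := g.2 hzu hzv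
    subst huv
    exact f.2 hu hv⟩
  mul_assoc a b c := Subtype.ext (PFun.comp_assoc c.1 b.1 a.1).symm

namespace FourGen

variable {Ω : Type*} (e : Ω ≃ Ω × ℕ × Bool) (a : ℕ → PartialBij Ω)

@[simp] theorem mul_apply (f g : PartialBij Ω) (ω : Ω) :
    (f * g).1 ω = Part.bind (f.1 ω) g.1 := rfl

def P : PartialBij Ω :=
  ⟨fun ω => Part.some (e.symm (ω, 0, false)), by
    intro x y z hx hy
    simp only [Part.mem_some_iff] at hx hy
    subst hx
    exact (Prod.mk.injEq .. ▸ e.symm.injective hy).1⟩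

def ufun : Ω →. Ω := fun z =>
  match e z with
  | (x, m, false) => Part.some (e.symm (x, m + 1, false))
  | (x, m + 1, true) => Part.some (e.symm (x, m, true))
  | (_, 0, true) => Part.none

theorem ufun_false (x : Ω) (m : ℕ) :
    ufun e (e.symm (x, m, false)) = Part.some (e.symm (x, m + 1, false)) := by
  simp [ufun]

theorem ufun_true (x : Ω) (m : ℕ) :
    ufun e (e.symm (x, m + 1, true)) = Part.some (e.symm (x, m, true)) := by
  simp [ufun]

def U : PartialBij Ω :=
  ⟨ufun e, by
    intro x y z hx hy
    unfold ufun at hx hy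
    rcases hex : e x with ⟨x1, m1, b1⟩
    rcases hey : e y with ⟨y1, m2, b2⟩
    rw [hex] at hx; rw [hey] at hy
    have exy : e x = e y := by
      rw [hex, hey]
      cases b1 <;> cases b2 <;> cases m1 <;> cases m2 <;>
        simp_all only [Part.mem_some_iff, Part.notMem_none] <;>
        (have h2 := e.symm.injective hy
         simp only [Prod.mk.injEq] at h2
         simp_all
         try omega)
    exact e.injective exy⟩


def vfun : Ω →. Ω := fun z =>
  match e z with
  | (x, m, false) => ((a m).1 x).map (fun y => e.symm (y, m, true))
  | (_, _, true) => Part.none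

theorem vfun_false (x : Ω) (m : ℕ) :
    vfun e a (e.symm (x, m, false)) = ((a m).1 x).map (fun y => e.symm (y, m, true)) := by
  simp [vfun]

def V : PartialBij Ω :=
  ⟨vfun e a, by
    intro x y z hx hy
    unfold vfun at hx hy
    rcases hex : e x with ⟨x1, m1, b1⟩
    rcases hey : e y with ⟨y1, m2, b2⟩
    rw [hex] at hx; rw [hey] at hy
    have exy : e x = e y := by
      rw [hex, hey]
      cases b1 <;> cases b2 <;>
        simp only [Part.mem_map_iff, Part.notMem_none] at hx hy
      · obtain ⟨w1, hw1, hz1⟩ := hx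
        obtain ⟨w2, hw2, hz2⟩ := hy
        rw [← hz1] at hz2
        have h2 := e.symm.injective hz2
        simp only [Prod.mk.injEq] at h2
        obtain ⟨hw, hm, -⟩ := h2
        rw [hm, hw] at hw2
        have := (a m1).2 hw1 hw2
        simp_all
    exact e.injective exy⟩

def qfun : Ω →. Ω := fun z =>
  match e z with
  | (y, 0, true) => Part.some y
  | _ => Part.none

def Q : PartialBij Ω :=
  ⟨qfun e, by
    intro x y z hx hy
    unfold qfun at hx hy
    rcases hex : e x with ⟨x1, m1, b1⟩
    rcases hey : e y with ⟨y1, m2, b2⟩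
    rw [hex] at hx; rw [hey] at hy
    have exy : e x = e y := by
      rw [hex, hey]
      cases b1 <;> cases b2 <;> cases m1 <;> cases m2 <;>
        simp_all only [Part.mem_some_iff, Part.notMem_none]
    exact e.injective exy⟩

theorem Q_apply (y : Ω) : (Q e).1 (e.symm (y, 0, true)) = Part.some y := by
  show qfun e _ = _
  simp [qfun]

theorem U_true (x : Ω) (m : ℕ) :
    (U e).1 (e.symm (x, m + 1, true)) = Part.some (e.symm (x, m, true)) :=
  ufun_true e x m

/-- `W1 n = P * U^n`. -/
def W1 : ℕ → PartialBij Ω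
  | 0 => P e
  | n + 1 => W1 n * U e

theorem W1_apply (n : ℕ) (ω : Ω) :
    (W1 e n).1 ω = Part.some (e.symm (ω, n, false)) := by
  induction n with
  | zero => rfl
  | succ n ih =>
    show Part.bind ((W1 e n).1 ω) (fun x => ufun e x) = _
    rw [ih, Part.bind_some]
    exact ufun_false e ω n

/-- `W3 n k = P * U^n * V * U^k`. -/
def W3 (n : ℕ) : ℕ → PartialBij Ω
  | 0 => W1 e n * V e a
  | k + 1 => W3 n k * U e

theorem W3_apply (n k : ℕ) (hk : k ≤ n) (ω : Ω) :
    (W3 e a n k).1 ω = ((a n).1 ω).map (fun y => e.symm (y, n - k, true)) := by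
  induction k with
  | zero =>
    show Part.bind ((W1 e n).1 ω) (fun x => vfun e a x) = _
    rw [W1_apply, Part.bind_some]
    show vfun e a _ = _
    rw [vfun_false]
    simp
  | succ k ih =>
    show Part.bind ((W3 e a n k).1 ω) (fun x => ufun e x) = _
    rw [ih (le_of_lt hk)]
    have hnk : n - k = (n - (k + 1)) + 1 := by omega
    ext z
    simp only [Part.mem_bind_iff, Part.mem_map_iff]
    constructor
    · rintro ⟨w, ⟨y, hy, rfl⟩, hz⟩
      rw [hnk, ufun_true] at hz
      simp only [Part.mem_some_iff] at hz
      exact ⟨y, hy, hz.symm⟩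
    · rintro ⟨y, hy, rfl⟩
      refine ⟨e.symm (y, n - k, true), ⟨y, hy, rfl⟩, ?_⟩
      rw [hnk, ufun_true]
      simp

def Wfull (n : ℕ) : PartialBij Ω := W3 e a n n * Q e

theorem Wfull_eq (n : ℕ) : Wfull e a n = a n := by
  apply Subtype.ext
  funext ω
  show Part.bind ((W3 e a n n).1 ω) (fun x => qfun e x) = (a n).1 ω
  rw [W3_apply e a n n le_rfl]
  ext z
  simp only [Part.mem_bind_iff, Part.mem_map_iff]
  constructor
  · rintro ⟨w, ⟨y, hy, rfl⟩, hz⟩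
    rw [Nat.sub_self, show qfun e (e.symm (y, 0, true)) = Part.some y from Q_apply e y] at hz
    simp only [Part.mem_some_iff] at hz
    exact hz ▸ hy
  · intro hz
    refine ⟨e.symm (z, n - n, true), ⟨z, hz, rfl⟩, ?_⟩
    rw [Nat.sub_self, show qfun e (e.symm (z, 0, true)) = Part.some z from Q_apply e z]
    simp

theorem Wfull_mem (n : ℕ) :
    Wfull e a n ∈ Subsemigroup.closure {P e, U e, V e a, Q e} := by
  set S := Subsemigroup.closure ({P e, U e, V e a, Q e} : Set (PartialBij Ω)) with hS
  have hp : P e ∈ S := Subsemigroup.subset_closure (by simp)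
  have hu : U e ∈ S := Subsemigroup.subset_closure (by simp)
  have hv : V e a ∈ S := Subsemigroup.subset_closure (by simp)
  have hq : Q e ∈ S := Subsemigroup.subset_closure (by simp)
  have h1 : ∀ m, W1 e m ∈ S := by
    intro m
    induction m with
    | zero => exact hp
    | succ m ih => exact S.mul_mem ih hu
  have h3 : ∀ k, W3 e a n k ∈ S := by
    intro k
    induction k with
    | zero => exact S.mul_mem (h1 n) hv
    | succ k ih => exact S.mul_mem ih hu
  exact S.mul_mem (h3 n) hq

end FourGen

/-- Every countable subset of the symmetric inverse semigroup `I_Ω` on an infinite set `Ω`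
is contained in a 4-generated subsemigroup of `I_Ω`. -/
theorem countable_subset_of_four_generated_subsemigroup_of_partialBij
    (Ω : Type*) [Infinite Ω] (A : Set (PartialBij Ω)) (hA : A.Countable) :
    ∃ f g h k : PartialBij Ω,
      A ⊆ (Subsemigroup.closure {f, g, h, k} : Subsemigroup (PartialBij Ω)) := by
  rcases A.eq_empty_or_nonempty with rfl | hne
  · have z : PartialBij Ω :=
      ⟨fun _ => Part.none, fun x y w hw _ => absurd hw (Part.notMem_none w)⟩
    exact ⟨z, z, z, z, by simp⟩
  · obtain ⟨a, rfl⟩ := hA.exists_eq_range hne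
    have he : Nonempty (Ω ≃ Ω × ℕ × Bool) := by
      have h : Cardinal.mk (Ω × ℕ × Bool) = Cardinal.mk Ω := by
        simp [Cardinal.mk_prod]
      exact Cardinal.eq.mp h.symm
    obtain ⟨e⟩ := he
    refine ⟨FourGen.P e, FourGen.U e, FourGen.V e a, FourGen.Q e, ?_⟩
    rintro x ⟨n, rfl⟩
    rw [← FourGen.Wfull_eq e a n]
    exact FourGen.Wfull_mem e a n
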